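/- Define H(q) = (A Aᵀ) · q^{⊗p} for q ∈ S^D, where A ∈ ℝ^{D^p × L} and q^{⊗p} denotes the p-fold Kronecker tensor power of q, viewed as a D^p × D^p matrix. Then H is nondecreasing on S^D_+ with respect to the Loewner order: if q1, q2 ∈ S^D_+ and q2 − q1 ∈ S^D_+, then H(q1) ≤ H(q2). Moreover, the gradient ∇H(a) lies in S^D_+ for every a ∈ S^D_+. -/

import Mathlib

open Filter Topology Matrix

/-- Frobenius inner product for matrices with general finite index types. -/
noncomputable def dotpG {m n : Type*} [Fintype m] [Fintype n] (a b : Matrix m n ℝ) : ℝ :=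
  ∑ i, ∑ j, a i j * b i j

/-- The `p`-fold Kronecker tensor power of a `D × D` matrix, viewed as a matrix indexed by
`p`-tuples of indices. -/
noncomputable def kpow {D : ℕ} (p : ℕ) (q : Matrix (Fin D) (Fin D) ℝ) :
    Matrix (Fin p → Fin D) (Fin p → Fin D) ℝ :=
  fun d d' => ∏ i, q (d i) (d' i)

/-- `H(q) = (A Aᵀ) · q^{⊗p}`. -/
noncomputable def Hfun {D p L : ℕ} (A : Matrix (Fin p → Fin D) (Fin L) ℝ)
    (q : Matrix (Fin D) (Fin D) ℝ) : ℝ :=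
  dotpG (A * A.transpose) (kpow p q)


/-! ### Auxiliary development -/


lemma sum_swap3 {α β γ : Type*} [Fintype α] [Fintype β] [Fintype γ] (f : α → β → γ → ℝ) :
    ∑ i, ∑ j, ∑ k, f i j k = ∑ k, ∑ i, ∑ j, f i j k := by
  calc ∑ i, ∑ j, ∑ k, f i j k = ∑ i, ∑ k, ∑ j, f i j k :=
        Finset.sum_congr rfl fun i _ => Finset.sum_comm
    _ = ∑ k, ∑ i, ∑ j, f i j k := Finset.sum_comm

lemma sum_swap4 {α β γ δ : Type*} [Fintype α] [Fintype β] [Fintype γ] [Fintype δ]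
    (f : α → β → γ → δ → ℝ) :
    ∑ i, ∑ j, ∑ d, ∑ d', f i j d d' = ∑ d, ∑ d', ∑ i, ∑ j, f i j d d' := by
  calc ∑ i, ∑ j, ∑ d, ∑ d', f i j d d'
      = ∑ i, ∑ d, ∑ d', ∑ j, f i j d d' := Finset.sum_congr rfl fun i _ =>
        (sum_swap3 fun d d' j => f i j d d').symm
    _ = ∑ d, ∑ d', ∑ i, ∑ j, f i j d d' :=
        (sum_swap3 fun d d' i => ∑ j, f i j d d').symm

/-- generalized Kronecker product with varying factors -/
noncomputable def genK {D p : ℕ} (Q : Fin p → Matrix (Fin D) (Fin D) ℝ) :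
    Matrix (Fin p → Fin D) (Fin p → Fin D) ℝ :=
  fun d d' => ∏ m, Q m (d m) (d' m)

lemma genK_posSemidef {D p : ℕ} {Q : Fin p → Matrix (Fin D) (Fin D) ℝ}
    (hQ : ∀ m, (Q m).PosSemidef) : (genK Q).PosSemidef := by
  have h : ∀ m, ∃ B : Matrix (Fin D) (Fin D) ℝ, Q m = Bᴴ * B := by
    intro m
    classical
    open scoped MatrixOrder in
    refine ⟨CFC.sqrt (Q m), ?_⟩
    open scoped MatrixOrder in
    rw [(Matrix.nonneg_iff_posSemidef.mp (CFC.sqrt_nonneg (Q m))).1,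
      CFC.sqrt_mul_sqrt_self _ (Matrix.nonneg_iff_posSemidef.mpr (hQ m))]
  choose B hB using h
  set C : Matrix (Fin p → Fin D) (Fin p → Fin D) ℝ := fun e d => ∏ m, B m (e m) (d m) with hC
  have : genK Q = Cᴴ * C := by
    ext d d'
    simp only [genK, hC, Matrix.mul_apply, Matrix.conjTranspose_apply, star_trivial]
    have : ∀ m, Q m (d m) (d' m) = ∑ k, B m k (d m) * B m k (d' m) := by
      intro m
      rw [hB m]
      simp [Matrix.mul_apply, Matrix.conjTranspose_apply]
    rw [Finset.prod_congr rfl fun m _ => this m, Finset.prod_univ_sum]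
    show _ = ∑ e : Fin p → Fin D, (∏ m, B m (e m) (d m)) * ∏ m, B m (e m) (d' m)
    exact (Finset.sum_congr rfl fun e _ => by rw [← Finset.prod_mul_distrib]).symm
  rw [this]
  exact Matrix.posSemidef_conjTranspose_mul_self _

lemma Snn {D p L : ℕ} (A : Matrix (Fin p → Fin D) (Fin L) ℝ)
    {M : Matrix (Fin p → Fin D) (Fin p → Fin D) ℝ} (hM : M.PosSemidef) :
    0 ≤ dotpG (A * A.transpose) M := by
  have key : dotpG (A * A.transpose) M
      = ∑ l : Fin L, dotProduct (star (fun d => A d l)) (M *ᵥ (fun d => A d l)) := by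
    simp only [dotpG, Matrix.mul_apply, Matrix.transpose_apply, dotProduct, Matrix.mulVec,
      star_trivial, Finset.sum_mul, Finset.mul_sum, Pi.star_apply]
    have e1 : ∀ d : Fin p → Fin D,
        (∑ d' : Fin p → Fin D, ∑ l : Fin L, A d l * A d' l * M d d')
          = ∑ l : Fin L, ∑ d' : Fin p → Fin D, A d l * A d' l * M d d' :=
      fun d => Finset.sum_comm
    simp only [e1]
    rw [Finset.sum_comm]
    exact Finset.sum_congr rfl fun l _ => Finset.sum_congr rfl fun d _ =>
      Finset.sum_congr rfl fun d' _ => by ring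
  rw [key]
  exact Finset.sum_nonneg fun l _ => hM.dotProduct_mulVec_nonneg _

noncomputable def Tlin {D p L : ℕ} (A : Matrix (Fin p → Fin D) (Fin L) ℝ)
    (c b : Matrix (Fin D) (Fin D) ℝ) : ℝ :=
  ∑ d, ∑ d', (A * A.transpose) d d' *
    ∑ k, b (d k) (d' k) * ∏ m ∈ Finset.univ.erase k, c (d m) (d' m)

lemma prod_ite_split {D p : ℕ} (b c : Matrix (Fin D) (Fin D) ℝ) (k : Fin p)
    (d d' : Fin p → Fin D) :
    (∏ m, (if m = k then b else c) (d m) (d' m))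
      = b (d k) (d' k) * ∏ m ∈ Finset.univ.erase k, c (d m) (d' m) := by
  rw [← Finset.mul_prod_erase Finset.univ _ (Finset.mem_univ k), if_pos rfl]
  exact congrArg _ (Finset.prod_congr rfl fun m hm => by
    rw [if_neg (Finset.ne_of_mem_erase hm)])

lemma Tlin_eq_sum {D p L : ℕ} (A : Matrix (Fin p → Fin D) (Fin L) ℝ)
    (c b : Matrix (Fin D) (Fin D) ℝ) :
    Tlin A c b = ∑ k, dotpG (A * A.transpose) (genK fun m => if m = k then b else c) := by
  simp only [Tlin, dotpG, genK, Finset.mul_sum, prod_ite_split]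
  rw [sum_swap3]

lemma Tlin_nonneg {D p L : ℕ} (A : Matrix (Fin p → Fin D) (Fin L) ℝ)
    {c b : Matrix (Fin D) (Fin D) ℝ} (hc : c.PosSemidef) (hb : b.PosSemidef) :
    0 ≤ Tlin A c b := by
  rw [Tlin_eq_sum]
  refine Finset.sum_nonneg fun k _ => Snn A (genK_posSemidef fun m => ?_)
  split_ifs <;> assumption

lemma hasDerivAt_Hfun {D p L : ℕ} (A : Matrix (Fin p → Fin D) (Fin L) ℝ)
    (a b : Matrix (Fin D) (Fin D) ℝ) (t : ℝ) :
    HasDerivAt (fun ε => Hfun A (a + ε • b)) (Tlin A (a + t • b) b) t := by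
  have key : ∀ ε : ℝ, Hfun A (a + ε • b)
      = ∑ d, ∑ d', (A * A.transpose) d d' * ∏ m, (a (d m) (d' m) + ε * b (d m) (d' m)) := by
    intro ε
    simp [Hfun, dotpG, kpow, Matrix.add_apply, Matrix.smul_apply, smul_eq_mul]
  have hder : ∀ d d' : Fin p → Fin D,
      HasDerivAt (fun ε : ℝ => ∏ m, (a (d m) (d' m) + ε * b (d m) (d' m)))
        (∑ k, b (d k) (d' k) *
          ∏ m ∈ Finset.univ.erase k, (a (d m) (d' m) + t * b (d m) (d' m))) t := by
    intro d d'
    have h := HasDerivAt.fun_finsetProd (u := Finset.univ)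
      (f := fun m ε => a (d m) (d' m) + ε * b (d m) (d' m))
      (f' := fun m => b (d m) (d' m)) (x := t)
      (fun m _ => (hasDerivAt_mul_const _).const_add _)
    refine h.congr_deriv ?_
    exact Finset.sum_congr rfl fun k _ => by rw [smul_eq_mul, mul_comm]
  have h2 : HasDerivAt
      (fun ε : ℝ => ∑ d, ∑ d', (A * A.transpose) d d' *
        ∏ m, (a (d m) (d' m) + ε * b (d m) (d' m)))
      (∑ d, ∑ d', (A * A.transpose) d d' *
        ∑ k, b (d k) (d' k) *
          ∏ m ∈ Finset.univ.erase k, (a (d m) (d' m) + t * b (d m) (d' m))) t :=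
    HasDerivAt.fun_sum fun d _ => HasDerivAt.fun_sum fun d' _ => (hder d d').const_mul _
  have e : Tlin A (a + t • b) b
      = ∑ d, ∑ d', (A * A.transpose) d d' *
        ∑ k, b (d k) (d' k) *
          ∏ m ∈ Finset.univ.erase k, (a (d m) (d' m) + t * b (d m) (d' m)) := by
    simp [Tlin, Matrix.add_apply, Matrix.smul_apply, smul_eq_mul]
  rw [e]
  exact h2.congr_of_eventuallyEq (Filter.Eventually.of_forall fun ε => (key ε))

noncomputable def gmat {D p L : ℕ} (A : Matrix (Fin p → Fin D) (Fin L) ℝ)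
    (a : Matrix (Fin D) (Fin D) ℝ) : Matrix (Fin D) (Fin D) ℝ :=
  fun i j => ∑ d, ∑ d', (A * A.transpose) d d' *
    ∑ k, (if d k = i ∧ d' k = j then ∏ m ∈ Finset.univ.erase k, a (d m) (d' m) else 0)

lemma dotpG_gmat {D p L : ℕ} (A : Matrix (Fin p → Fin D) (Fin L) ℝ)
    (a b : Matrix (Fin D) (Fin D) ℝ) :
    dotpG (gmat A a) b = Tlin A a b := by
  simp only [dotpG, gmat, Tlin, Finset.sum_mul]
  rw [sum_swap4]
  refine Finset.sum_congr rfl fun d _ => Finset.sum_congr rfl fun d' _ => ?_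
  simp only [mul_assoc, ← Finset.mul_sum]
  congr 1
  simp only [Finset.sum_mul, ite_mul, zero_mul]
  rw [sum_swap3]
  refine Finset.sum_congr rfl fun k _ => ?_
  simp [ite_and, Finset.sum_ite_eq, Finset.sum_ite_eq', mul_comm]

lemma vecMulVec_psd {D : ℕ} (x : Fin D → ℝ) : (Matrix.vecMulVec x x).PosSemidef := by
  refine Matrix.PosSemidef.of_dotProduct_mulVec_nonneg ?_ ?_
  · ext i j
    simp [Matrix.conjTranspose_apply, Matrix.vecMulVec_apply, mul_comm]
  · intro y
    have h : dotProduct (star y) (Matrix.vecMulVec x x *ᵥ y)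
        = (∑ i, x i * y i) * (∑ i, x i * y i) := by
      rw [Finset.sum_mul_sum]
      simp only [dotProduct, Matrix.mulVec, Matrix.vecMulVec_apply, star_trivial, Pi.star_apply,
        Finset.mul_sum]
      exact Finset.sum_congr rfl fun i _ => Finset.sum_congr rfl fun j _ => by ring
    rw [h]
    exact mul_self_nonneg _

lemma gmat_posSemidef {D p L : ℕ} (A : Matrix (Fin p → Fin D) (Fin L) ℝ)
    {a : Matrix (Fin D) (Fin D) ℝ} (ha : a.PosSemidef) : (gmat A a).PosSemidef := by
  have hsym : ∀ i j, gmat A a j i = gmat A a i j := by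
    intro i j
    simp only [gmat]
    rw [Finset.sum_comm]
    refine Finset.sum_congr rfl fun d _ => Finset.sum_congr rfl fun d' _ => ?_
    have h1 : (A * A.transpose) d' d = (A * A.transpose) d d' := by
      simp only [Matrix.mul_apply, Matrix.transpose_apply]
      exact Finset.sum_congr rfl fun l _ => mul_comm _ _
    have h2 : ∀ m : Fin p, a (d' m) (d m) = a (d m) (d' m) := by
      intro m
      have := congrFun (congrFun ha.1 (d m)) (d' m)
      simpa [Matrix.conjTranspose_apply] using this
    rw [h1]
    congr 1
    refine Finset.sum_congr rfl fun k _ => ?_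
    exact if_congr and_comm (Finset.prod_congr rfl fun m _ => h2 m) rfl
  refine Matrix.PosSemidef.of_dotProduct_mulVec_nonneg ?_ ?_
  · ext i j
    simp only [Matrix.conjTranspose_apply, star_trivial]
    exact hsym i j
  · intro x
    have h : dotProduct (star x) (gmat A a *ᵥ x) = dotpG (gmat A a) (Matrix.vecMulVec x x) := by
      simp only [dotProduct, Matrix.mulVec, dotpG, Matrix.vecMulVec_apply, star_trivial,
        Pi.star_apply, Finset.mul_sum]
      exact Finset.sum_congr rfl fun i _ => Finset.sum_congr rfl fun j _ => by ring
    rw [h, dotpG_gmat]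
    exact Tlin_nonneg A ha (vecMulVec_psd x)

lemma psd_smul {D : ℕ} {M : Matrix (Fin D) (Fin D) ℝ} (hM : M.PosSemidef) {t : ℝ} (ht : 0 ≤ t) :
    (t • M).PosSemidef := by
  refine Matrix.PosSemidef.of_dotProduct_mulVec_nonneg ?_ ?_
  · have h : Mᵀ = M := by
      rw [← Matrix.conjTranspose_eq_transpose_of_trivial]; exact hM.1
    simp [Matrix.IsHermitian, Matrix.conjTranspose_smul, Matrix.conjTranspose_eq_transpose_of_trivial, h]
  · intro x
    have : dotProduct (star x) ((t • M) *ᵥ x) = t * dotProduct (star x) (M *ᵥ x) := by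
      simp [Matrix.smul_mulVec, dotProduct_smul, smul_eq_mul]
    rw [this]
    exact mul_nonneg ht (hM.dotProduct_mulVec_nonneg x)

/-- `H` is nondecreasing on the PSD cone in the Loewner order, and its gradient (with respect
to the Frobenius inner product, computed along symmetric directions) is PSD on the cone. -/
theorem stmt_4 {D p L : ℕ} (A : Matrix (Fin p → Fin D) (Fin L) ℝ) :
    (∀ q1 q2 : Matrix (Fin D) (Fin D) ℝ, q1.PosSemidef → q2.PosSemidef →
      (q2 - q1).PosSemidef → Hfun A q1 ≤ Hfun A q2) ∧
    (∀ a : Matrix (Fin D) (Fin D) ℝ, a.PosSemidef →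
      ∃ g : Matrix (Fin D) (Fin D) ℝ, g.PosSemidef ∧
        ∀ b : Matrix (Fin D) (Fin D) ℝ, b.IsSymm →
          Tendsto (fun ε : ℝ => ε⁻¹ * (Hfun A (a + ε • b) - Hfun A a)) (𝓝[≠] 0)
            (𝓝 (dotpG g b))) := by
  constructor
  · intro q1 q2 h1 h2 h12
    set φ : ℝ → ℝ := fun t => Hfun A (q1 + t • (q2 - q1)) with hφ
    have hd : ∀ t : ℝ, HasDerivAt φ (Tlin A (q1 + t • (q2 - q1)) (q2 - q1)) t :=
      fun t => hasDerivAt_Hfun A q1 (q2 - q1) t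
    have mono : MonotoneOn φ (Set.Icc (0:ℝ) 1) := by
      apply monotoneOn_of_deriv_nonneg (convex_Icc 0 1)
      · exact Continuous.continuousOn (by
          rw [continuous_iff_continuousAt]
          exact fun t => (hd t).continuousAt)
      · exact fun t _ => (hd t).differentiableAt.differentiableWithinAt
      · intro t htt
        rw [(hd t).deriv]
        rw [interior_Icc] at htt
        exact Tlin_nonneg A (h1.add (psd_smul h12 htt.1.le)) h12
    have := mono (Set.left_mem_Icc.mpr zero_le_one) (Set.right_mem_Icc.mpr zero_le_one)
      zero_le_one
    simpa [hφ] using this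
  · intro a ha
    refine ⟨gmat A a, gmat_posSemidef A ha, fun b _ => ?_⟩
    have hd := hasDerivAt_Hfun A a b 0
    rw [show a + (0:ℝ) • b = a by simp] at hd
    rw [hasDerivAt_iff_tendsto_slope] at hd
    rw [dotpG_gmat]
    refine Tendsto.congr (fun ε => ?_) hd
    simp [slope_def_field, div_eq_inv_mul]
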